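/- Let Λ = (Λ_i)_{i∈I} be a Bessel g-sequence for H with bound B. Then for every family (f_i)_{i∈I} with f_i ∈ H_i and ∑_{i∈I} ‖f_i‖² < ∞, the series ∑_{i∈I} Λ_i* f_i converges unconditionally in H (i.e., the family (Λ_i* f_i)_{i∈I} is summable in H). -/

import Mathlib

open ContinuousLinearMap

noncomputable section

variable {I : Type*} {H : Type*} [NormedAddCommGroup H] [InnerProductSpace ℂ H] [CompleteSpace H]
  {G : I → Type*} [∀ i, NormedAddCommGroup (G i)] [∀ i, InnerProductSpace ℂ (G i)]
  [∀ i, CompleteSpace (G i)]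

/-- `Λ` is a Bessel g-sequence: for some `B > 0`, `∑ᵢ ‖Λᵢ f‖² ≤ B ‖f‖²` for all `f`. -/
def IsGBessel (Λ : ∀ i, H →L[ℂ] G i) : Prop :=
  ∃ B : ℝ, 0 < B ∧ ∀ f : H,
    Summable (fun i => ‖Λ i f‖ ^ 2) ∧ (∑' i, ‖Λ i f‖ ^ 2) ≤ B * ‖f‖ ^ 2

/-- `Λ` is a `K`-g-frame: for some `A, B > 0`,
`A ‖K* f‖² ≤ ∑ᵢ ‖Λᵢ f‖² ≤ B ‖f‖²` for all `f`. -/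
def IsKgFrame (K : H →L[ℂ] H) (Λ : ∀ i, H →L[ℂ] G i) : Prop :=
  ∃ A B : ℝ, 0 < A ∧ 0 < B ∧ ∀ f : H,
    Summable (fun i => ‖Λ i f‖ ^ 2) ∧
    A * ‖ContinuousLinearMap.adjoint K f‖ ^ 2 ≤ (∑' i, ‖Λ i f‖ ^ 2) ∧
    (∑' i, ‖Λ i f‖ ^ 2) ≤ B * ‖f‖ ^ 2

/-- `T : (⊕ᵢ Hᵢ)_{ℓ²} → H` is the synthesis operator of `Λ`, characterized by its adjoint
(the analysis operator) satisfying `(T* f)ᵢ = Λᵢ f` for all `f`. -/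
def IsSynthesis (Λ : ∀ i, H →L[ℂ] G i) (T : lp G 2 →L[ℂ] H) : Prop :=
  ∀ (f : H) (i : I), (ContinuousLinearMap.adjoint T f : ∀ i, G i) i = Λ i f

/-- `Γ` is a `K`-dual (Bessel g-sequence) of `Λ`: `K f = ∑ᵢ Λᵢ* (Γᵢ f)` for all `f`,
the sum converging in `H`. -/
def IsKDual (K : H →L[ℂ] H) (Λ Γ : ∀ i, H →L[ℂ] G i) : Prop :=
  ∀ f : H, HasSum (fun i => ContinuousLinearMap.adjoint (Λ i) (Γ i f)) (K f)

/-- if `Λ` is a Bessel g-sequence with bound `B` and `(fᵢ)ᵢ` satisfies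
`∑ᵢ ‖fᵢ‖² < ∞`, then `∑ᵢ Λᵢ* fᵢ` converges unconditionally in `H`
(i.e. the family `(Λᵢ* fᵢ)ᵢ` is summable). -/
theorem summable_adjoint_apply_of_bessel
    (Λ : ∀ i, H →L[ℂ] G i) (B : ℝ) (hB : 0 < B)
    (hΛ : ∀ f : H, Summable (fun i => ‖Λ i f‖ ^ 2) ∧ (∑' i, ‖Λ i f‖ ^ 2) ≤ B * ‖f‖ ^ 2)
    (g : ∀ i, G i) (hg : Summable (fun i => ‖g i‖ ^ 2)) :
    Summable (fun i => ContinuousLinearMap.adjoint (Λ i) (g i)) := by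
  -- Key finite estimate
  have key : ∀ t : Finset I, ‖∑ i ∈ t, ContinuousLinearMap.adjoint (Λ i) (g i)‖ ^ 2
      ≤ B * ∑ i ∈ t, ‖g i‖ ^ 2 := by
    intro t
    set h := ∑ i ∈ t, ContinuousLinearMap.adjoint (Λ i) (g i) with hh
    have hsum_eq : (inner ℂ h h : ℂ) = ∑ i ∈ t, (inner ℂ (g i) (Λ i h) : ℂ) := by
      conv_lhs => rw [hh]
      rw [sum_inner]
      exact Finset.sum_congr rfl fun i _ => ContinuousLinearMap.adjoint_inner_left (Λ i) h (g i)
    have hinner : ‖h‖ ^ 2 = ‖(∑ i ∈ t, (inner ℂ (g i) (Λ i h) : ℂ))‖ := by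
      rw [← hsum_eq, inner_self_eq_norm_sq_to_K]
      simp [abs_of_nonneg (sq_nonneg ‖h‖)]
    have hCS : ‖(∑ i ∈ t, (inner ℂ (g i) (Λ i h) : ℂ))‖
        ≤ ∑ i ∈ t, ‖g i‖ * ‖Λ i h‖ := by
      refine (norm_sum_le _ _).trans ?_
      exact Finset.sum_le_sum fun i _ => norm_inner_le_norm _ _
    have hCS2 : (∑ i ∈ t, ‖g i‖ * ‖Λ i h‖) ^ 2
        ≤ (∑ i ∈ t, ‖g i‖ ^ 2) * (∑ i ∈ t, ‖Λ i h‖ ^ 2) :=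
      Finset.sum_mul_sq_le_sq_mul_sq t _ _
    have hsum : (∑ i ∈ t, ‖Λ i h‖ ^ 2) ≤ B * ‖h‖ ^ 2 := by
      refine le_trans ?_ (hΛ h).2
      exact Summable.sum_le_tsum t (fun i _ => sq_nonneg _) (hΛ h).1
    rcases eq_or_lt_of_le (norm_nonneg h) with h0 | h0
    · rw [← h0]
      have : (0:ℝ) ≤ B * ∑ i ∈ t, ‖g i‖ ^ 2 := by positivity
      nlinarith
    · have h4 : (‖h‖ ^ 2) ^ 2 ≤ (∑ i ∈ t, ‖g i‖ ^ 2) * (B * ‖h‖ ^ 2) := by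
        calc (‖h‖ ^ 2) ^ 2 ≤ (∑ i ∈ t, ‖g i‖ * ‖Λ i h‖) ^ 2 := by
              rw [hinner]; exact pow_le_pow_left₀ (norm_nonneg _) hCS 2
          _ ≤ (∑ i ∈ t, ‖g i‖ ^ 2) * (∑ i ∈ t, ‖Λ i h‖ ^ 2) := hCS2
          _ ≤ (∑ i ∈ t, ‖g i‖ ^ 2) * (B * ‖h‖ ^ 2) := by
              apply mul_le_mul_of_nonneg_left hsum
              positivity
      have hpos : (0:ℝ) < ‖h‖ ^ 2 := by positivity
      nlinarith
  rw [summable_iff_vanishing_norm]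
  intro ε hε
  have hε2 : 0 < ε ^ 2 / B := by positivity
  obtain ⟨s, hs⟩ := summable_iff_vanishing_norm.1 hg (ε ^ 2 / B) hε2
  refine ⟨s, fun t ht => ?_⟩
  have := key t
  have h2 : ‖∑ i ∈ t, ‖g i‖ ^ 2‖ < ε ^ 2 / B := hs t ht
  have h3 : ∑ i ∈ t, ‖g i‖ ^ 2 < ε ^ 2 / B := (le_abs_self _).trans_lt (by rwa [Real.norm_eq_abs] at h2)
  have h4 : ‖∑ i ∈ t, ContinuousLinearMap.adjoint (Λ i) (g i)‖ ^ 2 < ε ^ 2 := by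
    calc _ ≤ B * ∑ i ∈ t, ‖g i‖ ^ 2 := this
      _ < B * (ε ^ 2 / B) := by exact mul_lt_mul_of_pos_left h3 hB
      _ = ε ^ 2 := by field_simp
  nlinarith [norm_nonneg (∑ i ∈ t, ContinuousLinearMap.adjoint (Λ i) (g i))]
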